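/- arXiv:1708.00291 — 2 statements merged into one kernel-verified Lean document; each statement's English description precedes it below -/
import Mathlib

section
/- For the norm ‖·‖_P on H ≅ ℝⁿ whose unit ball is the Voronoï region of A_n, the chromatic number of the unit distance graph G(ℝⁿ, ‖·‖_P) equals 2ⁿ. -/
open Set

/-- The hyperplane `H = {x ∈ ℝ^{n+1} : ∑ xᵢ = 0}`. -/
def Hset (n : ℕ) : Set (Fin (n + 1) → ℝ) := {x | ∑ i, x i = 0}

/-- The norm on `H` whose unit ball is the Voronoï region of `Aₙ`:
`‖x‖_P = max_j x_j - min_i x_i`. -/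
noncomputable def AnNorm (n : ℕ) (x : Fin (n + 1) → ℝ) : ℝ :=
  (⨆ i, x i) - (⨅ i, x i)

open Finset
noncomputable section
namespace VorAn
open scoped Classical
variable (n : ℕ)

lemma exists_max (g : Fin (n+1) → ℝ) : ∃ p, (∀ i, g i ≤ g p) ∧ (⨆ i, g i) = g p := by
  obtain ⟨p, hp⟩ := Finite.exists_max g
  exact ⟨p, hp, le_antisymm (ciSup_le hp) (le_ciSup (Set.Finite.bddAbove (Set.finite_range g)) p)⟩

lemma exists_min (g : Fin (n+1) → ℝ) : ∃ q, (∀ i, g q ≤ g i) ∧ (⨅ i, g i) = g q := by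
  obtain ⟨q, hq⟩ := Finite.exists_min g
  exact ⟨q, hq, le_antisymm (ciInf_le (Set.Finite.bddBelow (Set.finite_range g)) q) (le_ciInf hq)⟩

lemma card_filter_rank_lt {m k : ℕ} (hk : k ≤ m) (r : Fin m → ℕ)
    (hinj : Function.Injective r) (hle : ∀ i, r i < m) :
    (univ.filter (fun i => r i < k)).card = k := by
  set f : Fin m → Fin m := fun i => ⟨r i, hle i⟩ with hf
  have hfinj : Function.Injective f := by
    intro a b h
    apply hinj
    simpa [f, Fin.ext_iff] using h
  have hfbij : Function.Bijective f := (Finite.injective_iff_bijective).1 hfinj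
  have h1 : (univ.filter (fun i => r i < k)).card
      = (univ.filter (fun v : Fin m => (v : ℕ) < k)).card := by
    apply Finset.card_bij (fun i _ => f i)
    · intro a ha
      simp only [Finset.mem_filter, Finset.mem_univ, true_and] at ha ⊢
      exact ha
    · intro a _ b _ h
      exact hfinj h
    · intro b hb
      obtain ⟨a, ha⟩ := hfbij.2 b
      refine ⟨a, ?_, ha⟩
      simp only [Finset.mem_filter, Finset.mem_univ, true_and] at hb ⊢
      rw [← ha] at hb
      exact hb
  rw [h1]
  have h2 : (univ.filter (fun v : Fin m => (v : ℕ) < k)).image (Fin.val) = Finset.range k := by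
    ext t
    simp only [Finset.mem_image, Finset.mem_filter, Finset.mem_univ, true_and, Finset.mem_range]
    constructor
    · rintro ⟨v, hv, rfl⟩; exact hv
    · intro ht; exact ⟨⟨t, lt_of_lt_of_le ht hk⟩, ht, rfl⟩
  have h3 := Finset.card_image_of_injective
    (univ.filter (fun v : Fin m => (v : ℕ) < k)) (Fin.val_injective)
  rw [h2] at h3
  simpa using h3.symm

def fr (x : Fin (n+1) → ℝ) (i : Fin (n+1)) : ℝ := Int.fract (2 * x i)
def kk (x : Fin (n+1) → ℝ) : ℤ := -∑ i, ⌊2 * x i⌋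
def Plt (x : Fin (n+1) → ℝ) (i j : Fin (n+1)) : Prop :=
  fr n x i < fr n x j ∨ (fr n x i = fr n x j ∧ i < j)
def rk (x : Fin (n+1) → ℝ) (i : Fin (n+1)) : ℕ :=
  (univ.filter (fun j => Plt n x i j)).card
def chosen (x : Fin (n+1) → ℝ) (i : Fin (n+1)) : Prop := (rk n x i : ℤ) < kk n x
def rho (x : Fin (n+1) → ℝ) (i : Fin (n+1)) : ℤ :=
  ⌊2 * x i⌋ + if chosen n x i then 1 else 0
def avec (x : Fin (n+1) → ℝ) (i : Fin (n+1)) : ℝ := 2 * x i - rho n x i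

lemma Plt_irrefl (x) (i) : ¬ Plt n x i i := by
  simp [Plt]

lemma Plt_trans (x) {i j l} (h1 : Plt n x i j) (h2 : Plt n x j l) : Plt n x i l := by
  rcases h1 with h1 | ⟨e1, l1⟩ <;> rcases h2 with h2 | ⟨e2, l2⟩
  · exact Or.inl (h1.trans h2)
  · exact Or.inl (e2 ▸ h1)
  · exact Or.inl (e1 ▸ h2)
  · exact Or.inr ⟨e1.trans e2, l1.trans l2⟩

lemma Plt_total (x) {i j} (h : i ≠ j) : Plt n x i j ∨ Plt n x j i := by
  rcases lt_trichotomy (fr n x i) (fr n x j) with h1 | h1 | h1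
  · exact Or.inl (Or.inl h1)
  · rcases lt_or_gt_of_ne (fun e => h (by exact e)) with h2 | h2
    · exact Or.inl (Or.inr ⟨h1, h2⟩)
    · exact Or.inr (Or.inr ⟨h1.symm, h2⟩)
  · exact Or.inr (Or.inl h1)

lemma rk_lt_of_Plt (x) {i j} (h : Plt n x i j) : rk n x j < rk n x i := by
  apply Finset.card_lt_card
  constructor
  · intro l hl
    simp only [Finset.mem_filter, Finset.mem_univ, true_and] at hl ⊢
    exact Plt_trans n x h hl
  · intro hsub
    have := hsub (by simp [h] : j ∈ univ.filter (fun l => Plt n x i l))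
    simp only [Finset.mem_filter] at this
    exact Plt_irrefl n x j this.2

lemma Plt_of_rk_lt (x) {i j} (h : rk n x j < rk n x i) : Plt n x i j := by
  have hne : i ≠ j := by rintro rfl; exact lt_irrefl _ h
  rcases Plt_total n x hne with h1 | h1
  · exact h1
  · exact absurd (rk_lt_of_Plt n x h1) (by omega)

lemma rk_le (x) (i) : rk n x i ≤ n := by
  have : univ.filter (fun j => Plt n x i j) ⊆ univ.erase i := by
    intro j hj
    simp only [Finset.mem_filter, Finset.mem_univ, true_and] at hj
    apply Finset.mem_erase.2
    exact ⟨fun e => Plt_irrefl n x i (e ▸ hj), Finset.mem_univ _⟩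
  calc rk n x i ≤ (univ.erase i).card := Finset.card_le_card this
    _ = n := by simp

lemma rk_inj (x) : Function.Injective (rk n x) := by
  intro i j h
  by_contra hne
  rcases Plt_total n x hne with h1 | h1
  · exact absurd (rk_lt_of_Plt n x h1) (by omega)
  · exact absurd (rk_lt_of_Plt n x h1) (by omega)

lemma kk_eq_sum_fract (x : Fin (n+1) → ℝ) (hx : x ∈ Hset n) :
    (kk n x : ℝ) = ∑ i, fr n x i := by
  have hsum : ∑ i, (2 * x i) = 0 := by
    rw [← Finset.mul_sum]
    simp [Hset] at hx
    rw [hx]; ring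
  have : ∑ i, fr n x i = ∑ i, (2 * x i - ⌊2 * x i⌋) := by
    apply Finset.sum_congr rfl
    intro i _
    simp only [fr, Int.fract]
  rw [this, Finset.sum_sub_distrib, hsum]
  push_cast [kk]
  ring

lemma kk_bounds (x : Fin (n+1) → ℝ) (hx : x ∈ Hset n) :
    0 ≤ kk n x ∧ kk n x ≤ n + 1 := by
  have h := kk_eq_sum_fract n x hx
  constructor
  · have : (0:ℝ) ≤ (kk n x : ℝ) := by
      rw [h]
      exact Finset.sum_nonneg fun i _ => Int.fract_nonneg _
    exact_mod_cast this
  · have : (kk n x : ℝ) < (n+1 : ℝ) := by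
      rw [h]
      calc ∑ i, fr n x i < ∑ _i : Fin (n+1), (1:ℝ) :=
        Finset.sum_lt_sum_of_nonempty ⟨0, Finset.mem_univ 0⟩ (fun i _ => Int.fract_lt_one _)
        _ = (n+1 : ℝ) := by simp
    have : (kk n x) < (n:ℤ) + 1 := by exact_mod_cast this
    omega

lemma card_chosen (x : Fin (n+1) → ℝ) (hx : x ∈ Hset n) :
    ((univ.filter (chosen n x)).card : ℤ) = kk n x := by
  obtain ⟨h0, h1⟩ := kk_bounds n x hx
  set k' := (kk n x).toNat with hk'
  have hkk : (k' : ℤ) = kk n x := Int.toNat_of_nonneg h0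
  have hk'le : k' ≤ n + 1 := by omega
  have hiff : ∀ i, chosen n x i ↔ rk n x i < k' := by
    intro i
    rw [chosen, ← hkk]
    exact_mod_cast Iff.rfl
  have : (univ.filter (chosen n x)) = (univ.filter (fun i => rk n x i < k')) := by
    apply Finset.filter_congr
    intro i _
    simp [hiff i]
  rw [this, card_filter_rank_lt hk'le (rk n x) (rk_inj n x) (fun i => by
    have := rk_le n x i; omega), hkk]

lemma sum_rho (x : Fin (n+1) → ℝ) (hx : x ∈ Hset n) : ∑ i, rho n x i = 0 := by
  have hb : ∑ i, (if chosen n x i then (1:ℤ) else 0)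
      = ((univ.filter (chosen n x)).card : ℤ) := by
    rw [Finset.sum_boole]
  rw [show (∑ i, rho n x i) = (∑ i, ⌊2 * x i⌋) + ∑ i, (if chosen n x i then (1:ℤ) else 0) by
    rw [← Finset.sum_add_distrib]; rfl]
  rw [hb, card_chosen n x hx]
  simp [kk]

lemma avec_eq (x : Fin (n+1) → ℝ) (i : Fin (n+1)) :
    avec n x i = fr n x i - (if chosen n x i then (1:ℝ) else 0) := by
  simp only [avec, rho, fr, Int.fract]
  push_cast
  split <;> ring

lemma avec_diff_le (x : Fin (n+1) → ℝ) (i j : Fin (n+1)) :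
    avec n x i - avec n x j ≤ 1 ∧ (avec n x i - avec n x j = 1 → i < j) := by
  have hfi0 : 0 ≤ fr n x i := Int.fract_nonneg _
  have hfi1 : fr n x i < 1 := Int.fract_lt_one _
  have hfj0 : 0 ≤ fr n x j := Int.fract_nonneg _
  have hfj1 : fr n x j < 1 := Int.fract_lt_one _
  rw [avec_eq, avec_eq]
  by_cases hci : chosen n x i <;> by_cases hcj : chosen n x j <;>
    simp only [hci, hcj, if_true, if_false, if_pos, if_neg]
  · exact ⟨by linarith, fun h => by linarith⟩
  · exact ⟨by linarith, fun h => by linarith⟩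
  · have hrk : rk n x j < rk n x i := by
      simp only [chosen, not_lt] at hci
      have : (rk n x j : ℤ) < (rk n x i : ℤ) := lt_of_lt_of_le hcj hci
      exact_mod_cast this
    have hp : Plt n x i j := Plt_of_rk_lt n x hrk
    rcases hp with hp | ⟨hp, hij⟩
    · exact ⟨by linarith, fun h => by linarith⟩
    · exact ⟨by linarith, fun _ => hij⟩
  · exact ⟨by linarith, fun h => by linarith⟩

def colorEquiv : (Fin n → ZMod 2) ≃ Fin (2^n) := by
  apply Fintype.equivFinOfCardEq
  rw [Fintype.card_pi]
  simp [ZMod.card]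

def color (x : Fin (n+1) → ℝ) : Fin (2^n) :=
  colorEquiv n (fun i : Fin n => ((rho n x i.castSucc : ℤ) : ZMod 2))

lemma mu_even (x y : Fin (n+1) → ℝ) (hx : x ∈ Hset n) (hy : y ∈ Hset n)
    (hc : color n x = color n y) (i : Fin (n+1)) :
    (2:ℤ) ∣ (rho n x i - rho n y i) := by
  have hp : ∀ j : Fin n, ((rho n x j.castSucc : ℤ) : ZMod 2) = ((rho n y j.castSucc : ℤ) : ZMod 2) := by
    intro j
    have := (colorEquiv n).injective hc
    exact congrFun this j
  have hcast : ∀ j : Fin n, (2:ℤ) ∣ (rho n x j.castSucc - rho n y j.castSucc) := by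
    intro j
    have : (((rho n x j.castSucc - rho n y j.castSucc) : ℤ) : ZMod 2) = 0 := by
      push_cast
      rw [hp j]
      ring
    exact_mod_cast (ZMod.intCast_zmod_eq_zero_iff_dvd _ 2).1 this
  induction i using Fin.lastCases with
  | last =>
    have hsx := sum_rho n x hx
    have hsy := sum_rho n y hy
    rw [Fin.sum_univ_castSucc] at hsx hsy
    have : rho n x (Fin.last n) - rho n y (Fin.last n)
        = -∑ j : Fin n, (rho n x j.castSucc - rho n y j.castSucc) := by
      rw [Finset.sum_sub_distrib]
      omega
    rw [this]
    exact dvd_neg.2 (Finset.dvd_sum (fun j _ => hcast j))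
  | cast j => exact hcast j

theorem upper_proper (x : Fin (n+1) → ℝ) (hx : x ∈ Hset n) (y : Fin (n+1) → ℝ)
    (hy : y ∈ Hset n) (h1 : AnNorm n (x - y) = 1) : color n x ≠ color n y := by
  intro hc
  set μ : Fin (n+1) → ℤ := fun i => rho n x i - rho n y i with hμ
  set a : Fin (n+1) → ℝ := avec n x with ha
  set b : Fin (n+1) → ℝ := avec n y with hb
  set g : Fin (n+1) → ℝ := fun i => x i - y i with hg
  have hgi : ∀ i, 2 * g i = (μ i : ℝ) + a i - b i := by
    intro i
    simp only [hg, hμ, ha, hb, avec]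
    push_cast
    ring
  obtain ⟨p, hp, hsup⟩ := exists_max n g
  obtain ⟨q, hq, hinf⟩ := exists_min n g
  have hpq : g p - g q = 1 := by
    have : AnNorm n (x - y) = g p - g q := by
      rw [AnNorm]
      have e1 : (⨆ i, (x - y) i) = g p := by
        rw [← hsup]; rfl
      have e2 : (⨅ i, (x - y) i) = g q := by
        rw [← hinf]; rfl
      rw [e1, e2]
    rw [this] at h1
    exact h1
  have hdiff : ∀ s t : Fin (n+1), g s - g t ≤ 1 := by
    intro s t
    have := hp s
    have := hq t
    linarith
  have heven : ∀ i, (2:ℤ) ∣ μ i := fun i => mu_even n x y hx hy hc i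
  have hsum : ∑ i, μ i = 0 := by
    simp only [hμ, Finset.sum_sub_distrib, sum_rho n x hx, sum_rho n y hy, sub_zero]
  by_cases hall : ∀ i, μ i = 0
  · have h2 : (a p - a q) + (b q - b p) = 2 := by
      have e1 := hgi p
      have e2 := hgi q
      rw [hall p] at e1
      rw [hall q] at e2
      push_cast at e1 e2
      linarith
    have hA := avec_diff_le n x p q
    have hB := avec_diff_le n y q p
    have hA1 : a p - a q = 1 := by rw [← ha] at hA; linarith [hA.1, hB.1]
    have hB1 : b q - b p = 1 := by linarith [hA.1, hB.1]
    have := hA.2 (by rw [← ha] at hA ⊢; exact hA1)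
    have := hB.2 (by rw [← hb] at hB ⊢; exact hB1)
    omega
  · push_neg at hall
    obtain ⟨s, hs⟩ := hall
    have hpos : ∃ i, 0 < μ i := by
      by_contra hno
      push_neg at hno
      have : ∑ i, μ i < 0 := by
        have hlt : μ s < 0 := lt_of_le_of_ne (hno s) hs
        calc ∑ i, μ i < ∑ _i : Fin (n+1), (0:ℤ) := by
              apply Finset.sum_lt_sum
              · exact fun i _ => hno i
              · exact ⟨s, Finset.mem_univ s, hlt⟩
          _ = 0 := by simp
      omega
    have hneg : ∃ i, μ i < 0 := by
      by_contra hno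
      push_neg at hno
      obtain ⟨i₀, hi₀⟩ := hpos
      have : (0:ℤ) < ∑ i, μ i := by
        calc (0:ℤ) = ∑ _i : Fin (n+1), (0:ℤ) := by simp
          _ < ∑ i, μ i := by
              apply Finset.sum_lt_sum
              · exact fun i _ => hno i
              · exact ⟨i₀, Finset.mem_univ i₀, hi₀⟩
      omega
    obtain ⟨p', hp'⟩ := hpos
    obtain ⟨q', hq'⟩ := hneg
    have hp2 : 2 ≤ μ p' := by
      obtain ⟨c, hc2⟩ := heven p'
      omega
    have hq2 : μ q' ≤ -2 := by
      obtain ⟨c, hc2⟩ := heven q'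
      omega
    have hA := avec_diff_le n x q' p'
    have hB := avec_diff_le n y p' q'
    have e1 := hgi p'
    have e2 := hgi q'
    have hd := hdiff p' q'
    have hμr : (4:ℝ) ≤ (μ p' : ℝ) - (μ q' : ℝ) := by
      have : (2:ℤ) - (-2) ≤ μ p' - μ q' := by omega
      exact_mod_cast by exact_mod_cast this
    have hA1 : a q' - a p' = 1 := by
      rw [← ha] at hA
      linarith [hA.1, hB.1]
    have hB1 : b p' - b q' = 1 := by
      rw [← ha] at hA
      linarith [hA.1, hB.1]
    have h5 := hA.2 (by rw [← ha]; exact hA1)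
    have h6 := hB.2 (by rw [← hb]; exact hB1)
    omega

theorem upper_bound :
    ∃ c : (Fin (n + 1) → ℝ) → Fin (2 ^ n),
      ∀ x ∈ Hset n, ∀ y ∈ Hset n, AnNorm n (x - y) = 1 → c x ≠ c y :=
  ⟨color n, fun x hx y hy h => upper_proper n x hx y hy h⟩

end VorAn

noncomputable section
namespace VorAnLow
open scoped Classical
variable (n : ℕ)

/-- helper: AnNorm equals difference of attained max and min -/
lemma anNorm_eq (d : Fin (n+1) → ℝ) (p q : Fin (n+1))
    (hp : ∀ i, d i ≤ d p) (hq : ∀ i, d q ≤ d i) :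
    AnNorm n d = d p - d q := by
  rw [AnNorm]
  have e1 : (⨆ i, d i) = d p :=
    le_antisymm (ciSup_le hp) (le_ciSup (Set.Finite.bddAbove (Set.finite_range d)) p)
  have e2 : (⨅ i, d i) = d q :=
    le_antisymm (ciInf_le (Set.Finite.bddBelow (Set.finite_range d)) q) (le_ciInf hq)
  rw [e1, e2]

/-- the lift of an integer vector to the hyperplane (scaled by 1/2) -/
def psi (u : Fin n → ℤ) : Fin (n+1) → ℝ := fun i =>
  ((if h : (i : ℕ) < n then (u ⟨i, h⟩ : ℝ) else 0) - (∑ j, (u j : ℝ)) / (n+1)) / 2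

def tilde (u : Fin n → ℤ) : Fin (n+1) → ℝ := fun i =>
  if h : (i : ℕ) < n then (u ⟨i, h⟩ : ℝ) else 0

lemma psi_eq (u : Fin n → ℤ) (i : Fin (n+1)) :
    psi n u i = (tilde n u i - (∑ j, (u j : ℝ)) / (n+1)) / 2 := rfl

lemma sum_tilde (u : Fin n → ℤ) : ∑ i, tilde n u i = ∑ j, (u j : ℝ) := by
  rw [Fin.sum_univ_castSucc]
  have h1 : tilde n u (Fin.last n) = 0 := by
    simp [tilde]
  have h2 : ∀ j : Fin n, tilde n u (Fin.castSucc j) = (u j : ℝ) := by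
    intro j
    simp only [tilde, Fin.coe_castSucc]
    rw [dif_pos j.isLt]
  rw [h1]
  simp only [h2, add_zero]

lemma psi_mem_Hset (u : Fin n → ℤ) : psi n u ∈ Hset n := by
  show ∑ i, psi n u i = 0
  have e0 : ∑ i, psi n u i
      = (∑ i, (tilde n u i - (∑ j, (u j : ℝ)) / (n+1))) / 2 := by
    rw [Finset.sum_div]
    exact Finset.sum_congr rfl fun i _ => psi_eq n u i
  have e1 : (∑ i : Fin (n+1), (tilde n u i - (∑ j, (u j : ℝ)) / (n+1)))
      = (∑ i, tilde n u i) - (n+1) * ((∑ j, (u j : ℝ)) / (n+1)) := by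
    rw [Finset.sum_sub_distrib, Finset.sum_const, Finset.card_univ, Fintype.card_fin,
      nsmul_eq_mul]
    push_cast
    ring
  rw [e0, e1, sum_tilde]
  have hne : ((n:ℝ) + 1) ≠ 0 := by positivity
  field_simp
  ring

lemma tilde_sub (u v : Fin n → ℤ) (i : Fin (n+1)) :
    tilde n (u - v) i = tilde n u i - tilde n v i := by
  simp only [tilde]
  split
  · push_cast [Pi.sub_apply]
    ring
  · ring

/-- the edge criterion -/
def Mtwo (w : Fin n → ℤ) : Prop :=
  ((∀ i, 0 ≤ w i ∧ w i ≤ 2) ∧ ∃ i, w i = 2) ∨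
  ((∀ i, -2 ≤ w i ∧ w i ≤ 0) ∧ ∃ i, w i = -2) ∨
  ((∀ i, -1 ≤ w i ∧ w i ≤ 1) ∧ (∃ i, w i = 1) ∧ (∃ i, w i = -1))

lemma edge_of_Mtwo (u v : Fin n → ℤ) (h : Mtwo n (u - v)) :
    AnNorm n (psi n u - psi n v) = 1 := by
  set w := u - v with hw
  set d : Fin (n+1) → ℝ := psi n u - psi n v with hd
  have hdi : ∀ i, d i = (tilde n w i) / 2 - (∑ j, (w j:ℝ)) / (2*(n+1)) := by
    intro i
    have h0 : d i = psi n u i - psi n v i := rfl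
    have hsum : ∑ j, ((w:Fin n → ℤ) j : ℝ) = ∑ j, (u j:ℝ) - ∑ j, (v j:ℝ) := by
      rw [← Finset.sum_sub_distrib]
      apply Finset.sum_congr rfl
      intro j _
      rw [hw]
      push_cast [Pi.sub_apply]
      ring
    rw [h0, psi_eq, psi_eq, hw, tilde_sub, ← hw, hsum]
    have hne : ((n:ℝ)+1) ≠ 0 := by positivity
    field_simp
    ring
  -- in each case, exhibit max and min indices with value gap 2 for tilde
  have key : ∃ p q : Fin (n+1), (∀ i, tilde n w i ≤ tilde n w p) ∧
      (∀ i, tilde n w q ≤ tilde n w i) ∧ tilde n w p - tilde n w q = 2 := by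
    have htlast : tilde n w (Fin.last n) = 0 := by simp [tilde]
    have htc : ∀ j : Fin n, tilde n w (Fin.castSucc j) = (w j : ℝ) := by
      intro j
      simp only [tilde, Fin.coe_castSucc]
      rw [dif_pos j.isLt]
    have hall : ∀ (lo hi : ℤ), (∀ j, lo ≤ w j ∧ w j ≤ hi) → lo ≤ 0 → 0 ≤ hi →
        ∀ i, ((lo:ℝ) ≤ tilde n w i ∧ tilde n w i ≤ (hi:ℝ)) := by
      intro lo hi hbd hlo hhi i
      induction i using Fin.lastCases with
      | last => rw [htlast]; constructor <;> [exact_mod_cast hlo; exact_mod_cast hhi]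
      | cast j =>
          rw [htc j]
          constructor
          · exact_mod_cast (hbd j).1
          · exact_mod_cast (hbd j).2
    rcases h with ⟨hbd, i2, hi2⟩ | ⟨hbd, i2, hi2⟩ | ⟨hbd, ⟨i1, hi1⟩, ⟨im, him⟩⟩
    · refine ⟨Fin.castSucc i2, Fin.last n, ?_, ?_, ?_⟩
      · intro i
        rw [htc i2, hi2]
        exact_mod_cast (hall 0 2 hbd le_rfl (by norm_num) i).2
      · intro i
        rw [htlast]
        exact_mod_cast (hall 0 2 hbd le_rfl (by norm_num) i).1
      · rw [htc i2, htlast, hi2]; norm_num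
    · refine ⟨Fin.last n, Fin.castSucc i2, ?_, ?_, ?_⟩
      · intro i
        rw [htlast]
        exact_mod_cast (hall (-2) 0 hbd (by norm_num) le_rfl i).2
      · intro i
        rw [htc i2, hi2]
        exact_mod_cast (hall (-2) 0 hbd (by norm_num) le_rfl i).1
      · rw [htc i2, htlast, hi2]; norm_num
    · refine ⟨Fin.castSucc i1, Fin.castSucc im, ?_, ?_, ?_⟩
      · intro i
        rw [htc i1, hi1]
        exact_mod_cast (hall (-1) 1 hbd (by norm_num) (by norm_num) i).2
      · intro i
        rw [htc im, him]
        exact_mod_cast (hall (-1) 1 hbd (by norm_num) (by norm_num) i).1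
      · rw [htc i1, htc im, hi1, him]; norm_num
  obtain ⟨p, q, hp, hq, hgap⟩ := key
  have hp' : ∀ i, d i ≤ d p := by
    intro i
    rw [hdi i, hdi p]
    have := hp i
    linarith
  have hq' : ∀ i, d q ≤ d i := by
    intro i
    rw [hdi i, hdi q]
    have := hq i
    linarith
  rw [anNorm_eq n d p q hp' hq', hdi p, hdi q]
  linarith

variable (S : Finset (Fin n → ℤ))

def T (u : Fin n → ℤ) : Finset (Fin n → ℤ) :=
  S.filter (fun y => y ≠ u ∧ ∀ i, 0 ≤ y i - u i ∧ y i - u i ≤ 1)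

def nxt (u : Fin n → ℤ) : Fin n → ℤ :=
  if h : ∃ y₀ ∈ T n S u, ∀ y ∈ T n S u, ∀ i, y₀ i ≤ y i then h.choose else u

def dd (u : Fin n → ℤ) : Fin n → ℤ := nxt n S u - u

def Cplus (u v : Fin n → ℤ) : Prop :=
  ¬ (T n S u).Nonempty ∨ ∀ i, v i = 0 ∨ dd n S u i = 0

def Phi (p : (Fin n → ℤ) × (Fin n → ℤ)) : Fin n → ℤ :=
  if Cplus n S p.1 p.2 then p.1 + p.2 else p.1 - p.2

variable {n S}
variable (hS : ∀ u ∈ S, ∀ v ∈ S, u ≠ v → ¬ Mtwo n (u - v))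

section
include hS

lemma lem_f2 {y z : Fin n → ℤ} (hy : y ∈ S) (hz : z ∈ S) (hne : y ≠ z)
    (hbd : ∀ i, 0 ≤ y i - z i ∧ y i - z i ≤ 2) (h2 : ∃ i, y i - z i = 2) : False := by
  apply hS y hy z hz hne
  apply Or.inl
  constructor
  · intro i
    simpa [Pi.sub_apply] using hbd i
  · obtain ⟨i, hi⟩ := h2
    exact ⟨i, by simpa [Pi.sub_apply] using hi⟩

lemma lem_mixed {y z : Fin n → ℤ} (hy : y ∈ S) (hz : z ∈ S)
    (hbd : ∀ i, -1 ≤ y i - z i ∧ y i - z i ≤ 1)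
    (hpos : ∃ i, 0 < y i - z i) (hneg : ∃ i, y i - z i < 0) : False := by
  obtain ⟨i, hi⟩ := hpos
  obtain ⟨j, hj⟩ := hneg
  have hne : y ≠ z := by
    intro h
    rw [h] at hi
    omega
  apply hS y hy z hz hne
  apply Or.inr; apply Or.inr
  refine ⟨fun l => by simpa [Pi.sub_apply] using hbd l, ⟨i, ?_⟩, ⟨j, ?_⟩⟩
  · have := (hbd i).2
    simp only [Pi.sub_apply]
    omega
  · have := (hbd j).1
    simp only [Pi.sub_apply]
    omega

/-- every pair in `T u` is comparable, and there is a pointwise-minimal element -/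
lemma exists_min_T {u : Fin n → ℤ} (hne : (T n S u).Nonempty) :
    ∃ y₀ ∈ T n S u, ∀ y ∈ T n S u, ∀ i, y₀ i ≤ y i := by
  obtain ⟨y₀, hy₀, hmin⟩ := Finset.exists_min_image (T n S u) (fun y => ∑ i, y i) hne
  refine ⟨y₀, hy₀, ?_⟩
  intro y hy i
  by_cases heq : y = y₀
  · rw [heq]
  have hyS : y ∈ S := (Finset.mem_filter.1 hy).1
  have hy₀S : y₀ ∈ S := (Finset.mem_filter.1 hy₀).1
  have hybd : ∀ l, 0 ≤ y l - u l ∧ y l - u l ≤ 1 := (Finset.mem_filter.1 hy).2.2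
  have hy₀bd : ∀ l, 0 ≤ y₀ l - u l ∧ y₀ l - u l ≤ 1 := (Finset.mem_filter.1 hy₀).2.2
  have hdi : ∀ l, -1 ≤ y l - y₀ l ∧ y l - y₀ l ≤ 1 := by
    intro l
    have h1 := hybd l
    have h2 := hy₀bd l
    omega
  -- dichotomy
  by_cases hall : ∀ l, 0 ≤ y l - y₀ l
  · have := hall i; omega
  · push_neg at hall
    obtain ⟨j, hj⟩ := hall
    have hneg : ∀ l, y l - y₀ l ≤ 0 := by
      intro l
      by_contra hl
      push_neg at hl
      exact lem_mixed hS hyS hy₀S hdi ⟨l, hl⟩ ⟨j, by omega⟩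
    -- then y ≤ y₀ pointwise with y ≠ y₀, contradicting sum-minimality
    exfalso
    have hstrict : ∑ l, y l < ∑ l, y₀ l := by
      apply Finset.sum_lt_sum (fun l _ => by have := hneg l; omega)
      have : ∃ l, y l ≠ y₀ l := by
        by_contra hno
        push_neg at hno
        exact heq (funext hno)
      obtain ⟨l, hl⟩ := this
      exact ⟨l, Finset.mem_univ l, by have := hneg l; omega⟩
    have := hmin y hy
    omega

lemma nxt_spec {u : Fin n → ℤ} (hne : (T n S u).Nonempty) :
    nxt n S u ∈ T n S u ∧ ∀ y ∈ T n S u, ∀ i, nxt n S u i ≤ y i := by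
  have h := exists_min_T hS hne
  rw [nxt, dif_pos h]
  exact ⟨h.choose_spec.1, h.choose_spec.2⟩

lemma dd_spec {u : Fin n → ℤ} (hne : (T n S u).Nonempty) :
    (∀ i, 0 ≤ dd n S u i ∧ dd n S u i ≤ 1) ∧ (∃ i, dd n S u i = 1) ∧
    (∀ y ∈ T n S u, ∀ i, dd n S u i ≤ y i - u i) := by
  obtain ⟨hmem, hmin⟩ := nxt_spec hS hne
  have hb := (Finset.mem_filter.1 hmem).2.2
  have hne' : nxt n S u ≠ u := (Finset.mem_filter.1 hmem).2.1
  refine ⟨fun i => by have := hb i; simp only [dd, Pi.sub_apply]; omega, ?_, ?_⟩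
  · have : ∃ i, nxt n S u i ≠ u i := by
      by_contra hno
      push_neg at hno
      exact hne' (funext hno)
    obtain ⟨i, hi⟩ := this
    refine ⟨i, ?_⟩
    have := hb i
    simp only [dd, Pi.sub_apply]
    omega
  · intro y hy i
    have := hmin y hy i
    have hbu := hb i
    simp only [dd, Pi.sub_apply]
    omega

omit hS in
lemma mem_T {u u' : Fin n → ℤ} (hu' : u' ∈ S) (hne : u' ≠ u)
    (hb : ∀ i, 0 ≤ u' i - u i ∧ u' i - u i ≤ 1) : u' ∈ T n S u :=
  Finset.mem_filter.2 ⟨hu', hne, hb⟩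

lemma case_pp {u v u' v' : Fin n → ℤ} (hu : u ∈ S) (hu' : u' ∈ S)
    (hv' : ∀ i, 0 ≤ v' i ∧ v' i ≤ 1) (hv : ∀ i, 0 ≤ v i ∧ v i ≤ 1)
    (heq : u + v = u' + v') (hne : u ≠ u')
    (hw : ∀ i, 0 ≤ u' i - u i ∧ u' i - u i ≤ 1)
    (hC : Cplus n S u v) : False := by
  have hmem : u' ∈ T n S u := mem_T hu' (Ne.symm hne) hw
  have hTne : (T n S u).Nonempty := ⟨u', hmem⟩
  have hperp : ∀ i, v i = 0 ∨ dd n S u i = 0 := by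
    rcases hC with hC | hC
    · exact absurd hTne hC
    · exact hC
  obtain ⟨hddb, ⟨i, hi⟩, hddle⟩ := dd_spec hS hTne
  have h1 : u' i - u i = 1 := by
    have := hddle u' hmem i
    have := hw i
    omega
  have h2 : v i = 1 := by
    have := congrFun heq i
    simp only [Pi.add_apply] at this
    have := hv' i
    have := hv i
    omega
  rcases hperp i with h | h <;> omega

lemma case_mm {u v u' v' : Fin n → ℤ} (hu : u ∈ S) (hu' : u' ∈ S)
    (hv' : ∀ i, 0 ≤ v' i ∧ v' i ≤ 1) (hv : ∀ i, 0 ≤ v i ∧ v i ≤ 1)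
    (heq : u - v = u' - v') (hne : u ≠ u')
    (hw : ∀ i, 0 ≤ u' i - u i ∧ u' i - u i ≤ 1)
    (hC : ¬ Cplus n S u v) : False := by
  rw [Cplus] at hC
  push_neg at hC
  obtain ⟨hTne', hs⟩ := hC
  have hTne : (T n S u).Nonempty := hTne'
  obtain ⟨s, hvs, hds⟩ := hs
  have hmem : u' ∈ T n S u := mem_T hu' (Ne.symm hne) hw
  obtain ⟨hddb, -, hddle⟩ := dd_spec hS hTne
  have h1 : u' s - u s = 1 := by
    have := hddle u' hmem s
    have := hw s
    have := hddb s
    omega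
  have h2 : v' s = v s + (u' s - u s) := by
    have := congrFun heq s
    simp only [Pi.sub_apply] at this
    omega
  have := hv' s
  have := hv s
  have hvs1 : v s = 1 := by
    have := hddb s
    have := hv s
    omega
  omega

lemma case_pm {u v u' v' : Fin n → ℤ} (hu : u ∈ S) (hu' : u' ∈ S)
    (hv : ∀ i, 0 ≤ v i ∧ v i ≤ 1) (hv' : ∀ i, 0 ≤ v' i ∧ v' i ≤ 1)
    (heq : u + v = u' - v')
    (hC' : ¬ Cplus n S u' v') : False := by
  rw [Cplus] at hC'
  push_neg at hC'
  obtain ⟨hTne', hs⟩ := hC'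
  have hTne : (T n S u').Nonempty := hTne'
  obtain ⟨s, hvs, hds⟩ := hs
  obtain ⟨hddb, -, hddle⟩ := dd_spec hS hTne
  have hds1 : dd n S u' s = 1 := by
    have := hddb s
    omega
  have hvs1 : v' s = 1 := by
    have := hv' s
    omega
  have hweq : ∀ i, u' i - u i = v i + v' i := by
    intro i
    have := congrFun heq i
    simp only [Pi.add_apply, Pi.sub_apply] at this
    omega
  by_cases huu : u = u'
  · have := hweq s
    rw [huu] at this
    have := hv s
    omega
  -- u ≠ u'
  by_cases h2 : ∃ i, u' i - u i = 2
  · exact lem_f2 hS hu' hu (Ne.symm huu)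
      (fun i => by have := hweq i; have := hv i; have := hv' i; omega) h2
  -- all entries of w in {0,1}
  push_neg at h2
  obtain ⟨hy, -⟩ := nxt_spec hS hTne
  set y := nxt n S u' with hydef
  have hyS : y ∈ S := (Finset.mem_filter.1 hy).1
  have hyu' : ∀ i, y i - u' i = dd n S u' i := by
    intro i
    simp [dd, Pi.sub_apply, hydef]
  have hyne : y ≠ u := by
    intro h
    have hws : u' s - u s = 1 := by
      have := hweq s
      have := hv s
      have := hv' s
      have := h2 s
      omega
    have := hyu' s
    rw [h] at this
    omega
  apply lem_f2 hS hyS hu hyne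
  · intro i
    have e1 : y i - u i = (u' i - u i) + dd n S u' i := by
      have := hyu' i
      omega
    have := hweq i
    have := hv i
    have := hv' i
    have := hddb i
    have := h2 i
    omega
  · refine ⟨s, ?_⟩
    have e1 : y s - u s = (u' s - u s) + dd n S u' s := by
      have := hyu' s
      omega
    have hws : u' s - u s = 1 := by
      have := hweq s
      have := hv s
      have := hv' s
      have := h2 s
      omega
    omega

theorem Phi_injOn {u v u' v' : Fin n → ℤ} (hu : u ∈ S) (hu' : u' ∈ S)
    (hv : ∀ i, 0 ≤ v i ∧ v i ≤ 1) (hv' : ∀ i, 0 ≤ v' i ∧ v' i ≤ 1)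
    (heq : Phi n S (u, v) = Phi n S (u', v')) : u = u' ∧ v = v' := by
  rw [Phi, Phi] at heq
  have trich : ∀ (a b : Fin n → ℤ), a ∈ S → b ∈ S →
      (∀ i, -1 ≤ b i - a i ∧ b i - a i ≤ 1) → a ≠ b →
      (∀ i, 0 ≤ b i - a i ∧ b i - a i ≤ 1) ∨ (∀ i, 0 ≤ a i - b i ∧ a i - b i ≤ 1) := by
    intro a b ha hb hbd hne
    by_cases hall : ∀ i, 0 ≤ b i - a i
    · exact Or.inl (fun i => ⟨hall i, (hbd i).2⟩)
    · push_neg at hall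
      obtain ⟨j, hj⟩ := hall
      by_cases hall2 : ∀ i, b i - a i ≤ 0
      · exact Or.inr (fun i => by have := hbd i; have := hall2 i; omega)
      · push_neg at hall2
        obtain ⟨l, hl⟩ := hall2
        exact absurd (lem_mixed hS hb ha (fun i => by have := hbd i; omega)
          ⟨l, by omega⟩ ⟨j, by omega⟩) (fun h => h)
  by_cases hC : Cplus n S u v <;> by_cases hC' : Cplus n S u' v'
  · rw [if_pos hC, if_pos hC'] at heq
    by_cases huu : u = u'
    · subst huu
      refine ⟨rfl, funext fun i => ?_⟩
      have := congrFun heq i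
      simp only [Pi.add_apply] at this
      omega
    · have hbd : ∀ i, -1 ≤ u' i - u i ∧ u' i - u i ≤ 1 := by
        intro i
        have := congrFun heq i
        simp only [Pi.add_apply] at this
        have := hv i
        have := hv' i
        omega
      rcases trich u u' hu hu' hbd huu with h | h
      · exact (case_pp hS hu hu' hv' hv heq huu h hC).elim
      · exact (case_pp hS hu' hu hv hv' heq.symm (Ne.symm huu) h hC').elim
  · rw [if_pos hC, if_neg hC'] at heq
    exact (case_pm hS hu hu' hv hv' heq hC').elim
  · rw [if_neg hC, if_pos hC'] at heq
    exact (case_pm hS hu' hu hv' hv heq.symm hC).elim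
  · rw [if_neg hC, if_neg hC'] at heq
    by_cases huu : u = u'
    · subst huu
      refine ⟨rfl, funext fun i => ?_⟩
      have := congrFun heq i
      simp only [Pi.sub_apply] at this
      omega
    · have hbd : ∀ i, -1 ≤ u' i - u i ∧ u' i - u i ≤ 1 := by
        intro i
        have := congrFun heq i
        simp only [Pi.sub_apply] at this
        have := hv i
        have := hv' i
        omega
      rcases trich u u' hu hu' hbd huu with h | h
      · exact (case_mm hS hu hu' hv' hv heq huu h hC).elim
      · exact (case_mm hS hu' hu hv hv' heq.symm (Ne.symm huu) h hC').elim

omit hS in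
lemma Phi_def (p : (Fin n → ℤ) × (Fin n → ℤ)) :
    Phi n S p = p.1 + p.2 ∨ Phi n S p = p.1 - p.2 := by
  rw [Phi]
  split
  · exact Or.inl rfl
  · exact Or.inr rfl

end
/-- the key cardinality bound for one independent set -/
lemma indep_card_bound (N : ℕ) (S : Finset (Fin n → ℤ))
    (hSbox : ∀ u ∈ S, ∀ i, 0 ≤ u i ∧ u i ≤ (N:ℤ) - 1)
    (hS : ∀ u ∈ S, ∀ v ∈ S, u ≠ v → ¬ Mtwo n (u - v)) :
    S.card * 2^n ≤ (N + 2)^n := by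
  classical
  set cubeF : Finset (Fin n → ℤ) := Fintype.piFinset (fun _ => Finset.Icc (0:ℤ) 1) with hcube
  set boxB : Finset (Fin n → ℤ) := Fintype.piFinset (fun _ => Finset.Icc (-1:ℤ) (N:ℤ)) with hboxB
  have hcubecard : cubeF.card = 2^n := by
    rw [hcube, Fintype.card_piFinset]
    simp [Int.card_Icc]
  have hboxBcard : boxB.card = (N+2)^n := by
    rw [hboxB, Fintype.card_piFinset]
    have : (Finset.Icc (-1:ℤ) (N:ℤ)).card = N + 2 := by
      rw [Int.card_Icc]
      omega
    simp [this]
  have hprod : (S ×ˢ cubeF).card = S.card * 2^n := by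
    rw [Finset.card_product, hcubecard]
  rw [← hprod, ← hboxBcard]
  apply Finset.card_le_card_of_injOn (fun p => Phi n S p)
  · intro p hp
    obtain ⟨hp1, hp2⟩ := Finset.mem_product.1 hp
    have hu := hSbox p.1 hp1
    have hv : ∀ i, 0 ≤ p.2 i ∧ p.2 i ≤ 1 := by
      intro i
      have := Fintype.mem_piFinset.1 hp2 i
      simpa [Finset.mem_Icc] using this
    rcases Phi_def (S := S) p with h | h <;> simp only [Finset.mem_coe] <;> rw [h] <;> rw [hboxB, Fintype.mem_piFinset] <;>
      intro i <;> simp only [Pi.add_apply, Pi.sub_apply, Finset.mem_Icc] <;>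
      [(have := hu i; have := hv i; omega); (have := hu i; have := hv i; omega)]
  · intro p hp q hq heq
    obtain ⟨hp1, hp2⟩ := Finset.mem_product.1 (Finset.mem_coe.1 hp)
    obtain ⟨hq1, hq2⟩ := Finset.mem_product.1 (Finset.mem_coe.1 hq)
    have hv : ∀ i, 0 ≤ p.2 i ∧ p.2 i ≤ 1 := by
      intro i
      have := Fintype.mem_piFinset.1 hp2 i
      simpa [Finset.mem_Icc] using this
    have hv' : ∀ i, 0 ≤ q.2 i ∧ q.2 i ≤ 1 := by
      intro i
      have := Fintype.mem_piFinset.1 hq2 i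
      simpa [Finset.mem_Icc] using this
    have := Phi_injOn hS (u := p.1) (u' := q.1) (v := p.2) (v' := q.2) hp1 hq1 hv hv'
      (by simpa using heq)
    exact Prod.ext this.1 this.2

lemma pow_bound (a k : ℕ) : (a+2)^(k+1) ≤ a^(k+1) + 2*(k+1)*(a+2)^k := by
  induction k with
  | zero => simp
  | succ k ih =>
    have h1 : (a+2)^(k+2) = (a+2)^(k+1) * (a+2) := by ring
    have h2 : (a+2)^(k+1) * (a+2) ≤ (a^(k+1) + 2*(k+1)*(a+2)^k) * (a+2) := by
      apply Nat.mul_le_mul_right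
      exact ih
    have h3 : (a^(k+1) + 2*(k+1)*(a+2)^k) * (a+2)
        = a^(k+2) + 2*a^(k+1) + 2*(k+1)*(a+2)^(k+1) := by ring
    have h4 : a^(k+1) ≤ (a+2)^(k+1) := Nat.pow_le_pow_left (by omega) _
    calc (a+2)^(k+2) = (a+2)^(k+1) * (a+2) := h1
      _ ≤ (a^(k+1) + 2*(k+1)*(a+2)^k) * (a+2) := h2
      _ = a^(k+2) + 2*a^(k+1) + 2*(k+1)*(a+2)^(k+1) := h3
      _ ≤ a^(k+2) + 2*(a+2)^(k+1) + 2*(k+1)*(a+2)^(k+1) := by omega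
      _ = a^(k+2) + 2*(k+2)*(a+2)^(k+1) := by ring

lemma final_arith (hn : 1 ≤ n) (m : ℕ)
    (h : (n * 2^(n+1))^n * 2^n ≤ m * (n * 2^(n+1) + 2)^n) : 2^n ≤ m := by
  set N := n * 2^(n+1) with hN
  by_contra hm
  push_neg at hm
  have hm1 : m + 1 ≤ 2^n := hm
  obtain ⟨k, hk⟩ : ∃ k, n = k + 1 := ⟨n - 1, by omega⟩
  have hb := pow_bound N k
  rw [← hk] at hb
  -- (N+2)^n ≤ N^n + 2n(N+2)^(n-1)   (with n = k+1)
  have key : N^n * 2^n + (N+2)^n ≤ 2^n * (N+2)^n := by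
    calc N^n * 2^n + (N+2)^n ≤ m * (N+2)^n + (N+2)^n := by omega
      _ = (m+1) * (N+2)^n := by ring
      _ ≤ 2^n * (N+2)^n := Nat.mul_le_mul_right _ hm1
  have key2 : 2^n * (N+2)^n ≤ 2^n * N^n + 2^n * (2*n*(N+2)^k) := by
    have : (N+2)^n ≤ N^n + 2*n*(N+2)^k := hb
    calc 2^n * (N+2)^n ≤ 2^n * (N^n + 2*n*(N+2)^k) := Nat.mul_le_mul_left _ this
      _ = 2^n * N^n + 2^n * (2*n*(N+2)^k) := by ring
  have hNval : 2^n * (2*n) = N := by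
    rw [hN]
    ring
  have key3 : 2^n * (2*n*(N+2)^k) = N * (N+2)^k := by
    rw [← hNval]
    ring
  -- so (N+2)^n ≤ N * (N+2)^k, but (N+2)^n = (N+2)*(N+2)^k > N*(N+2)^k
  have hcomm : N^n * 2^n = 2^n * N^n := Nat.mul_comm _ _
  have key4 : (N+2)^n ≤ N * (N+2)^k := by omega
  have hexp : (N+2)^n = (N+2) * (N+2)^k := by
    rw [hk]; ring
  have hpos : 0 < (N+2)^k := pow_pos (by omega : 0 < N + 2) k
  rw [hexp] at key4
  have : N * (N+2)^k < (N+2) * (N+2)^k := by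
    have h2 : N < N + 2 := by omega
    exact Nat.mul_lt_mul_of_lt_of_le h2 le_rfl hpos
  omega

theorem lower_bound (hn : 1 ≤ n) (m : ℕ)
    (hex : ∃ c : (Fin (n + 1) → ℝ) → Fin m,
      ∀ x ∈ Hset n, ∀ y ∈ Hset n, AnNorm n (x - y) = 1 → c x ≠ c y) :
    2 ^ n ≤ m := by
  classical
  obtain ⟨c, hc⟩ := hex
  set N : ℕ := n * 2^(n+1) with hN
  set boxN : Finset (Fin n → ℤ) :=
    Fintype.piFinset (fun _ => Finset.Icc (0:ℤ) ((N:ℤ)-1)) with hbox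
  have hboxcard : boxN.card = N^n := by
    rw [hbox, Fintype.card_piFinset]
    have : (Finset.Icc (0:ℤ) ((N:ℤ)-1)).card = N := by
      rw [Int.card_Icc]
      omega
    simp [this]
  set f : (Fin n → ℤ) → Fin m := fun u => c (psi n u) with hf
  have hfib : boxN.card = ∑ k : Fin m, (boxN.filter (fun u => f u = k)).card :=
    Finset.card_eq_sum_card_fiberwise (fun u _ => Finset.mem_univ (f u))
  have hfiber_bound : ∀ k : Fin m,
      (boxN.filter (fun u => f u = k)).card * 2^n ≤ (N+2)^n := by
    intro k
    apply indep_card_bound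
    · intro u hu i
      have hu' := Fintype.mem_piFinset.1 (Finset.mem_filter.1 hu).1 i
      simpa [Finset.mem_Icc] using hu'
    · intro u hu v hv hne hM
      have h1 : f u = k := (Finset.mem_filter.1 hu).2
      have h2 : f v = k := (Finset.mem_filter.1 hv).2
      have hedge := edge_of_Mtwo n u v hM
      exact hc (psi n u) (psi_mem_Hset n u) (psi n v) (psi_mem_Hset n v) hedge
        (by rw [hf] at h1 h2; simp only at h1 h2; rw [h1, h2])
  have htotal : N^n * 2^n ≤ m * (N+2)^n := by
    calc N^n * 2^n = boxN.card * 2^n := by rw [hboxcard]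
      _ = (∑ k : Fin m, (boxN.filter (fun u => f u = k)).card) * 2^n := by rw [hfib]
      _ = ∑ k : Fin m, (boxN.filter (fun u => f u = k)).card * 2^n := by
          rw [Finset.sum_mul]
      _ ≤ ∑ _k : Fin m, (N+2)^n := Finset.sum_le_sum (fun k _ => hfiber_bound k)
      _ = m * (N+2)^n := by simp [Finset.sum_const, Finset.card_univ]
  exact final_arith hn m htotal

end VorAnLow
end

/-- The chromatic number of the unit distance graph of `(H, ‖·‖_P)`, `H ≅ ℝⁿ`,
equals `2ⁿ`. -/
theorem chromatic_number_voronoi_An (n : ℕ) (hn : 2 ≤ n) :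
    (∃ c : (Fin (n + 1) → ℝ) → Fin (2 ^ n),
      ∀ x ∈ Hset n, ∀ y ∈ Hset n, AnNorm n (x - y) = 1 → c x ≠ c y) ∧
    (∀ m : ℕ, (∃ c : (Fin (n + 1) → ℝ) → Fin m,
        ∀ x ∈ Hset n, ∀ y ∈ Hset n, AnNorm n (x - y) = 1 → c x ≠ c y) →
      2 ^ n ≤ m) :=
  ⟨VorAn.upper_bound n, fun m hm => VorAnLow.lower_bound (n := n) (by omega) m hm⟩
end
end

section
/- Let G_P be a discrete induced subgraph of a unit distance graph G(ℝⁿ,‖·‖_P) and G̃ a graph on the same vertex set V such that any two vertices at G̃-distance 2 are at polytope distance 1 (Property D). Then any A ⊆ V avoiding polytope distance 1 decomposes as a union of G̃-cliques whose closed G̃-neighborhoods are pairwise disjoint. -/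
open Set

lemma two_step {α : Type*} (G : SimpleGraph α) {x y z : α}
    (hxy : G.Adj x y) (hyz : G.Adj y z) (hne : x ≠ z) (hnadj : ¬ G.Adj x z) :
    G.dist x z = 2 := by
  have hle : G.dist x z ≤ 2 := by
    have := SimpleGraph.dist_le (SimpleGraph.Walk.cons hxy (SimpleGraph.Walk.cons hyz SimpleGraph.Walk.nil))
    simpa using this
  have hr : G.Reachable x z := ⟨SimpleGraph.Walk.cons hxy (SimpleGraph.Walk.cons hyz SimpleGraph.Walk.nil)⟩
  have h0 : G.dist x z ≠ 0 := by
    intro h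
    rcases SimpleGraph.dist_eq_zero_iff_eq_or_not_reachable.mp h with h' | h'
    · exact hne h'
    · exact h' hr
  have h1 : G.dist x z ≠ 1 := fun h => hnadj (SimpleGraph.dist_eq_one_iff_adj.mp h)
  omega

/-- Property D and the clique decomposition:
if any two vertices at distance 2 in the auxiliary graph `Gt` are at polytope
distance 1, then any set `A` of vertices avoiding polytope distance 1 decomposes
as a union of cliques of `Gt` with pairwise disjoint closed neighborhoods. -/
theorem avoiding_set_decomposes_into_cliques (n : ℕ)
    (Nf : (Fin n → ℝ) → ℝ) (V : Set (Fin n → ℝ))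
    (hdisc : ∀ R : ℝ, (V ∩ {x | ∀ i, |x i| ≤ R}).Finite)
    (Gt : SimpleGraph V)
    (hD : ∀ u v : V, Gt.dist u v = 2 → Nf ((u : Fin n → ℝ) - (v : Fin n → ℝ)) = 1)
    (A : Set V) (hA : ∀ x ∈ A, ∀ y ∈ A, Nf ((x : Fin n → ℝ) - (y : Fin n → ℝ)) ≠ 1) :
    ∃ 𝒞 : Set (Set V), ⋃₀ 𝒞 = A ∧ (∀ C ∈ 𝒞, Gt.IsClique C) ∧
      𝒞.Pairwise fun C C' =>
        Disjoint (C ∪ {v : V | ∃ c ∈ C, Gt.Adj v c})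
          (C' ∪ {v : V | ∃ c ∈ C', Gt.Adj v c}) := by
  -- relation: same clique
  set r : V → V → Prop := fun x y => x ∈ A ∧ y ∈ A ∧ (x = y ∨ Gt.Adj x y) with hr
  -- key: two A-points joined by a path of length ≤ 2 are r-related
  have key : ∀ x ∈ A, ∀ y ∈ A, x ≠ y → ¬ Gt.Adj x y → ∀ z, ¬ (Gt.Adj x z ∧ Gt.Adj z y) := by
    intro x hx y hy hne hnadj z ⟨h1, h2⟩
    exact hA x hx y hy (hD x y (two_step Gt h1 h2 hne hnadj))
  have rsymm : ∀ {x y}, r x y → r y x := by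
    rintro x y ⟨h1, h2, h3⟩
    exact ⟨h2, h1, by tauto⟩
  have rtrans : ∀ {x y z}, r x y → r y z → r x z := by
    rintro x y z ⟨hx, hy, hxy⟩ ⟨-, hz, hyz⟩
    refine ⟨hx, hz, ?_⟩
    rcases hxy with rfl | hxy
    · exact hyz
    rcases hyz with rfl | hyz
    · exact Or.inr hxy
    by_cases hxz : x = z
    · exact Or.inl hxz
    by_cases hadj : Gt.Adj x z
    · exact Or.inr hadj
    exact absurd ⟨hxy, hyz⟩ (key x hx z hz hxz hadj y)
  set cl : V → Set V := fun a => {x | r a x} with hcl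
  have clEq : ∀ {a b}, r a b → cl a = cl b := by
    intro a b hab
    ext x
    exact ⟨fun h => rtrans (rsymm hab) h, fun h => rtrans hab h⟩
  refine ⟨{C | ∃ a ∈ A, C = cl a}, ?_, ?_, ?_⟩
  · ext x
    simp only [mem_sUnion, Set.mem_setOf_eq]
    constructor
    · rintro ⟨C, ⟨a, ha, rfl⟩, hx⟩
      exact hx.2.1
    · intro hx
      exact ⟨cl x, ⟨x, hx, rfl⟩, hx, hx, Or.inl rfl⟩
  · rintro C ⟨a, ha, rfl⟩ x hx y hy hne
    obtain ⟨-, hxA, hax⟩ := hx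
    obtain ⟨-, hyA, hay⟩ := hy
    rcases hax with rfl | hax
    · rcases hay with rfl | hay
      · exact absurd rfl hne
      · exact hay
    rcases hay with rfl | hay
    · exact hax.symm
    by_cases hadj : Gt.Adj x y
    · exact hadj
    exact absurd ⟨hax.symm, hay⟩ (key x hxA y hyA hne hadj a)
  · rintro C ⟨a, ha, rfl⟩ C' ⟨b, hb, rfl⟩ hne
    rw [Set.disjoint_left]
    rintro v hv hv'
    apply hne
    -- from hv : v ∈ cl a ∪ nbhd, get p ∈ cl a with p ∈ A and (v = p ∨ Adj v p)
    have hget : ∀ (c : V), c ∈ A →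
        v ∈ cl c ∪ {w : V | ∃ p ∈ cl c, Gt.Adj w p} →
        ∃ p, r c p ∧ (v = p ∨ Gt.Adj v p) := by
      rintro c hc (hvc | ⟨p, hp, hadj⟩)
      · exact ⟨v, hvc, Or.inl rfl⟩
      · exact ⟨p, hp, Or.inr hadj⟩
    obtain ⟨p, hap, hvp⟩ := hget a ha hv
    obtain ⟨q, hbq, hvq⟩ := hget b hb hv'
    have hpA := hap.2.1
    have hqA := hbq.2.1
    have hpq : r p q := by
      refine ⟨hpA, hqA, ?_⟩
      by_cases hpqe : p = q
      · exact Or.inl hpqe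
      by_cases hadj : Gt.Adj p q
      · exact Or.inr hadj
      rcases hvp with rfl | hvp
      · rcases hvq with rfl | hvq
        · exact absurd rfl hpqe
        · exact Or.inr hvq
      rcases hvq with rfl | hvq
      · exact Or.inr hvp.symm
      exact absurd ⟨hvp.symm, hvq⟩ (key p hpA q hqA hpqe hadj v)
    calc cl a = cl p := clEq hap
    _ = cl q := clEq hpq
    _ = cl b := (clEq hbq).symm
end
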